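/- Let A = {a_0, a_1, ..., a_n} be a finite set with n ≥ 1, and let B be any finite set. Then every semiring homomorphism ν from ℤ_pos^A to ℤ_pos^B is geometric with respect to the generators F_1, ..., F_n of ℤ₀^A, where F_i(a_i) = -1, F_i(a_0) = 1, and F_i = 0 elsewhere: i.e., for every b ∈ B there exist a_j ∈ A and a rational t ≥ 0 such that (ν(F_1)(b), ..., ν(F_n)(b)) = t·(F_1(a_j), ..., F_n(a_j)). -/

import Mathlib

/-- The degree of `F : A → ℤ`. -/
def degSum {A : Type*} [Fintype A] (F : A → ℤ) : ℤ := ∑ a, F a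

/-- The semiring `ℤ_pos^A`: integer-valued functions on `A` of nonnegative
degree, together with `-∞` (modelled by `none`). -/
abbrev Zpos (A : Type*) [Fintype A] := Option {F : A → ℤ // 0 ≤ degSum F}

/-- Addition on `ℤ_pos^A`: pointwise max, with `-∞` as identity. -/
def Zpos.add {A : Type*} [Fintype A] : Zpos A → Zpos A → Zpos A
  | none, x => x
  | x, none => x
  | some F, some G =>
      some ⟨fun a => max (F.1 a) (G.1 a),
        le_trans F.2 (Finset.sum_le_sum fun a _ => le_max_left _ _)⟩

/-- Multiplication on `ℤ_pos^A`: pointwise sum, with `-∞` absorbing. -/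
def Zpos.mul {A : Type*} [Fintype A] : Zpos A → Zpos A → Zpos A
  | none, _ => none
  | _, none => none
  | some F, some G =>
      some ⟨fun a => F.1 a + G.1 a, by
        have h : degSum (fun a => F.1 a + G.1 a) = degSum F.1 + degSum G.1 := by
          simp [degSum, Finset.sum_add_distrib]
        rw [h]; exact add_nonneg F.2 G.2⟩

/-- The multiplicative identity of `ℤ_pos^A`: the zero function. -/
def Zpos.one {A : Type*} [Fintype A] : Zpos A :=
  some ⟨fun _ => 0, by simp [degSum]⟩

/-- The generator `F_i` of `ℤ₀^{A}` for `A = {a_0, …, a_n}`: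
`F_i(a_i) = -1`, `F_i(a_0) = 1`, `F_i = 0` elsewhere. -/
def FelFun (n : ℕ) (i : Fin n) : Fin (n + 1) → ℤ :=
  fun a => if a = i.succ then -1 else if a = 0 then 1 else 0

theorem FelFun_deg (n : ℕ) (i : Fin n) : degSum (FelFun n i) = 0 := by
  classical
  have hne : (i.succ : Fin (n + 1)) ≠ 0 := Fin.succ_ne_zero i
  have hpt : ∀ a : Fin (n + 1), FelFun n i a =
      (if a = i.succ then (-1 : ℤ) else 0) + (if a = 0 then 1 else 0) := by
    intro a
    by_cases h1 : a = i.succ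
    · subst h1; simp [FelFun, hne]
    · by_cases h2 : a = 0
      · subst h2; simp [FelFun, h1, Ne.symm hne]
      · simp [FelFun, h1, h2]
  simp only [degSum, hpt, Finset.sum_add_distrib]
  rw [Finset.sum_ite_eq' Finset.univ, Finset.sum_ite_eq' Finset.univ]
  simp

/-- The generator `F_i` as an element of `ℤ_pos^{Fin (n+1)}`. -/
def Fel (n : ℕ) (i : Fin n) : Zpos (Fin (n + 1)) :=
  some ⟨FelFun n i, le_of_eq (FelFun_deg n i).symm⟩

/-- Every semiring homomorphism
`ν : ℤ_pos^{A} → ℤ_pos^{B}` with `A = {a_0, a_1, …, a_n}`, `n ≥ 1`, is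
geometric with respect to the generators `F_1, …, F_n`: for every `b ∈ B`
there exist `a_j ∈ A` and a rational `t ≥ 0` such that
`(ν F_1)(b), …, (ν F_n)(b)) = t • (F_1(a_j), …, F_n(a_j))`. -/
theorem hom_Zpos_geometric (n : ℕ) (hn : 1 ≤ n) (B : Type*) [Fintype B]
    (ν : Zpos (Fin (n + 1)) → Zpos B)
    (hzero : ν none = none)
    (hone : ν Zpos.one = Zpos.one)
    (haddν : ∀ x y, ν (Zpos.add x y) = Zpos.add (ν x) (ν y))
    (hmulν : ∀ x y, ν (Zpos.mul x y) = Zpos.mul (ν x) (ν y)) :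
    ∀ b : B, ∃ (j : Fin (n + 1)) (t : ℚ), 0 ≤ t ∧
      ∀ i : Fin n, ∃ Gi : {F : B → ℤ // 0 ≤ degSum F},
        ν (Fel n i) = some Gi ∧ (Gi.1 b : ℚ) = t * (FelFun n i j : ℚ) := by
  classical
  -- ν (Fel n i) is never none, since Fel n i is a unit
  have hsome : ∀ i : Fin n, ∃ G, ν (Fel n i) = some G := by
    intro i
    cases hG : ν (Fel n i) with
    | some G => exact ⟨G, rfl⟩
    | none =>
      exfalso
      have hdeg : (0 : ℤ) ≤ degSum (fun a => -(FelFun n i a)) := by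
        have : degSum (fun a => -(FelFun n i a)) = -degSum (FelFun n i) := by
          simp [degSum]
        rw [this, FelFun_deg]; norm_num
      have hinv : Zpos.mul (Fel n i) (some ⟨fun a => -(FelFun n i a), hdeg⟩)
          = Zpos.one := by
        simp only [Zpos.mul, Zpos.one, Fel]
        congr 1
        ext a
        ring
      have h2 := hmulν (Fel n i) (some ⟨fun a => -(FelFun n i a), hdeg⟩)
      rw [hinv, hone, hG] at h2
      simp [Zpos.mul, Zpos.one] at h2
  choose G hG using hsome
  intro b
  set x : Fin n → ℤ := fun i => (G i).1 b with hx
  -- the element H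
  have hHdeg : (0:ℤ) ≤ degSum (fun a : Fin (n+1) => if a = 0 then (1:ℤ) else 0) := by
    rw [degSum, Finset.sum_ite_eq' Finset.univ]
    simp
  set Hel : Zpos (Fin (n+1)) := some ⟨fun a => if a = 0 then 1 else 0, hHdeg⟩ with hHel
  -- Zpos.add (Fel n i) Zpos.one = Hel
  have haddone : ∀ i : Fin n, Zpos.add (Fel n i) Zpos.one = Hel := by
    intro i
    simp only [Zpos.add, Zpos.one, Fel, hHel]
    congr 1
    ext a
    by_cases h1 : a = i.succ
    · subst h1; simp [FelFun, Fin.succ_ne_zero]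
    · by_cases h2 : a = 0
      · subst h2; simp [FelFun, Ne.symm (Fin.succ_ne_zero i)]
      · simp [FelFun, h1, h2]
  have haddij : ∀ i j : Fin n, i ≠ j → Zpos.add (Fel n i) (Fel n j) = Hel := by
    intro i j hij
    simp only [Zpos.add, Fel, hHel]
    congr 1
    ext a
    by_cases h1 : a = i.succ
    · subst h1
      have : (i.succ : Fin (n+1)) ≠ j.succ := by
        simpa [Fin.succ_inj] using hij
      simp [FelFun, Fin.succ_ne_zero, this]
    · by_cases h2 : a = j.succ
      · subst h2
        simp [FelFun, Fin.succ_ne_zero, h1]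
      · by_cases h3 : a = 0
        · subst h3; simp [FelFun, Ne.symm (Fin.succ_ne_zero i), Ne.symm (Fin.succ_ne_zero j)]
        · simp [FelFun, h1, h2, h3]
  -- apply ν
  have i0 : Fin n := ⟨0, hn⟩
  obtain ⟨c, hc⟩ : ∃ c, ν Hel = some c := by
    have := haddν (Fel n i0) Zpos.one
    rw [haddone i0, hG i0, hone] at this
    simp only [Zpos.add, Zpos.one] at this
    exact ⟨_, this⟩
  have hmax1 : ∀ i : Fin n, c.1 b = max (x i) 0 := by
    intro i
    have h := haddν (Fel n i) Zpos.one
    rw [haddone i, hG i, hone, hc] at h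
    simp only [Zpos.add, Zpos.one, Option.some.injEq] at h
    have := congrFun (congrArg Subtype.val h) b
    simpa [hx] using this
  have hmax2 : ∀ i j : Fin n, i ≠ j → c.1 b = max (x i) (x j) := by
    intro i j hij
    have h := haddν (Fel n i) (Fel n j)
    rw [haddij i j hij, hG i, hG j, hc] at h
    simp only [Zpos.add, Option.some.injEq] at h
    have := congrFun (congrArg Subtype.val h) b
    simpa [hx] using this
  by_cases hneg : ∃ i, x i < 0
  · obtain ⟨i, hi⟩ := hneg
    have hc0 : c.1 b = 0 := by
      have := hmax1 i
      rw [max_eq_right hi.le] at this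
      exact this
    have hxj : ∀ j, j ≠ i → x j = 0 := by
      intro j hj
      have h2 := hmax2 i j (Ne.symm hj)
      rw [hc0] at h2
      have h3 := hmax1 j
      rw [hc0] at h3
      rcases max_choice (x i) (x j) with h | h <;> rcases max_choice (x j) (0:ℤ) with h' | h' <;>
        omega
    refine ⟨i.succ, -(x i : ℚ), by rw [neg_nonneg]; exact_mod_cast hi.le, fun i' => ⟨G i', hG i', ?_⟩⟩
    by_cases hii : i' = i
    · subst hii
      simp [FelFun, hx]
    · have h1 : (i.succ : Fin (n+1)) ≠ i'.succ := by
        simpa [Fin.succ_inj] using Ne.symm hii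
      have h2 := hxj i' hii
      have hF : FelFun n i' i.succ = 0 := by
        simp [FelFun, Ne.symm h1, Fin.succ_ne_zero, (Ne.symm hii : i ≠ i')]
      rw [hF]
      have : ((G i').1 b : ℚ) = 0 := by exact_mod_cast h2
      rw [this]; ring
  · push_neg at hneg
    have hxc : ∀ i, x i = c.1 b := by
      intro i
      rw [hmax1 i, max_eq_left (hneg i)]
    refine ⟨0, (c.1 b : ℚ), ?_, fun i' => ⟨G i', hG i', ?_⟩⟩
    · have h0 : (0:ℤ) ≤ c.1 b := by rw [hmax1 i0]; exact le_max_right _ _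
      exact_mod_cast h0
    · have h2 := hxc i'
      have hF : FelFun n i' 0 = 1 := by
        simp [FelFun, Ne.symm (Fin.succ_ne_zero i')]
      rw [hF, Int.cast_one, mul_one]
      exact_mod_cast h2
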